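/- Every finite positive definite Hankel matrix extends to a positive definite sequence: if $s_0, \ldots, s_{2n}$ are reals with $H_n = [s_{i+j}]_{i,j=0}^n$ positive definite, then there exists an infinite sequence $\{\tilde{s}_k\}_{k\geq 0}$ with $\tilde{s}_k = s_k$ for $0 \leq k \leq 2n$ such that $[\tilde{s}_{i+j}]_{i,j=0}^m$ is positive definite for every $m \geq 0$. -/

import Mathlib

open Matrix

/-- Hankel matrix of a sequence. -/
def hankelMatrix (s : ℕ → ℝ) (n : ℕ) : Matrix (Fin (n + 1)) (Fin (n + 1)) ℝ :=
  Matrix.of fun i j => s ((i : ℕ) + (j : ℕ))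

private lemma sum_extend_mul {α β : Type*} [Fintype α] [Fintype β] [DecidableEq β]
    (e : α → β) (he : Function.Injective e) (x : α → ℝ) (g : β → ℝ) :
    ∑ b, Function.extend e x 0 b * g b = ∑ a, x a * g (e a) := by
  rw [← Finset.sum_subset (Finset.subset_univ (Finset.univ.image e))]
  · rw [Finset.sum_image (fun a _ a' _ h => he h)]
    simp [he.extend_apply]
  · intro b _ hb
    have hnb : ¬∃ a, e a = b := fun ⟨a, ha⟩ => hb (Finset.mem_image.mpr ⟨a, Finset.mem_univ a, ha⟩)
    rw [Function.extend_apply' _ _ _ hnb]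
    simp

private lemma posdef_submatrix {β α : Type*} [Fintype β] [Fintype α] [DecidableEq β]
    [DecidableEq α] {M : Matrix β β ℝ} (hM : M.PosDef) (e : α → β)
    (he : Function.Injective e) : (M.submatrix e e).PosDef := by
  refine Matrix.PosDef.of_dotProduct_mulVec_pos ?_ ?_
  · ext i j
    simp only [Matrix.conjTranspose_apply, Matrix.submatrix_apply, star_trivial]
    exact hM.1.apply (e i) (e j)
  · intro x hx
    set y : β → ℝ := Function.extend e x 0 with hy
    have hyv : ∀ a, y (e a) = x a := fun a => he.extend_apply x 0 a
    have hyne : y ≠ 0 := by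
      intro h
      apply hx
      ext a
      rw [← hyv a, h]
      rfl
    have hpos := hM.dotProduct_mulVec_pos hyne
    have key : star y ⬝ᵥ (M *ᵥ y) = star x ⬝ᵥ ((M.submatrix e e) *ᵥ x) := by
      simp only [dotProduct, Matrix.mulVec, Pi.star_apply, star_trivial]
      rw [sum_extend_mul e he x]
      refine Finset.sum_congr rfl fun a _ => ?_
      congr 1
      simp only [dotProduct, Matrix.submatrix_apply]
      calc ∑ b, M (e a) b * y b = ∑ b, y b * M (e a) b := by
            refine Finset.sum_congr rfl fun b _ => mul_comm _ _
        _ = ∑ a', x a' * M (e a) (e a') := sum_extend_mul e he x _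
        _ = ∑ a', M (e a) (e a') * x a' := by
            refine Finset.sum_congr rfl fun b _ => mul_comm _ _
    rw [← key]
    exact hpos

private lemma posdef_fromBlocks {m n : Type*} [Fintype m] [DecidableEq m] [Fintype n]
    {A : Matrix m m ℝ} (B : Matrix m n ℝ) {D : Matrix n n ℝ} (hA : A.PosDef) [Invertible A]
    (hS : (D - Bᴴ * A⁻¹ * B).PosDef) : (Matrix.fromBlocks A B Bᴴ D).PosDef := by
  refine Matrix.PosDef.of_dotProduct_mulVec_pos ((Matrix.IsHermitian.fromBlocks₁₁ B D hA.1).mpr hS.1) fun x hx => ?_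
  rw [Matrix.dotProduct_mulVec, ← Sum.elim_comp_inl_inr x,
    Matrix.schur_complement_eq₁₁ B D _ _ hA.1]
  by_cases hy : x ∘ Sum.inr = 0
  · have hxl : x ∘ Sum.inl ≠ 0 := by
      intro h
      apply hx
      funext i
      cases i with
      | inl i => exact congrFun h i
      | inr i => exact congrFun hy i
    rw [hy]
    simp only [Matrix.mulVec_zero, add_zero, star_zero, Matrix.zero_vecMul,
      zero_dotProduct]
    rw [← Matrix.dotProduct_mulVec]
    exact hA.dotProduct_mulVec_pos hxl
  · apply add_pos_of_nonneg_of_pos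
    · rw [← Matrix.dotProduct_mulVec]
      exact hA.posSemidef.dotProduct_mulVec_nonneg _
    · rw [← Matrix.dotProduct_mulVec]
      exact hS.dotProduct_mulVec_pos hy

private lemma onestep (m : ℕ) (s : ℕ → ℝ) (h : (hankelMatrix s m).PosDef) :
    ∃ s' : ℕ → ℝ, (∀ k ≤ 2 * m, s' k = s k) ∧ (hankelMatrix s' (m + 1)).PosDef := by
  classical
  set A := hankelMatrix s m with hA
  haveI : Invertible A := h.isUnit.invertible
  set g : ℕ → ℝ := fun k => if k ≤ 2 * m then s k else 0 with hg
  set B : Matrix (Fin (m + 1)) (Fin 1) ℝ := Matrix.of (fun i _ => g ((i : ℕ) + (m + 1))) with hB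
  set b : ℝ := (Bᴴ * A⁻¹ * B) 0 0 + 1 with hbdef
  set D : Matrix (Fin 1) (Fin 1) ℝ := Matrix.of (fun _ _ => b) with hD
  set s' : ℕ → ℝ := fun k => if k = 2 * m + 2 then b else g k with hs'
  refine ⟨s', fun k hk => ?_, ?_⟩
  · simp only [hs', hg]
    rw [if_neg (by omega), if_pos hk]
  · have hschur : (D - Bᴴ * A⁻¹ * B).PosDef := by
      have hone : D - Bᴴ * A⁻¹ * B = 1 := by
        ext i j
        rw [Subsingleton.elim i 0, Subsingleton.elim j 0]
        simp only [Matrix.sub_apply, hD, Matrix.of_apply, hbdef, Matrix.one_apply_eq]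
        ring
      rw [hone]
      exact Matrix.PosDef.one
    have hfb : (Matrix.fromBlocks A B Bᴴ D).PosDef := posdef_fromBlocks B h hschur
    set f : Fin (m + 2) → Fin (m + 1) ⊕ Fin 1 :=
      fun i => if hi : (i : ℕ) < m + 1 then Sum.inl ⟨i, hi⟩ else Sum.inr 0 with hf
    have hfinj : Function.Injective f := by
      intro i j hij
      have hi2 := i.isLt; have hj2 := j.isLt
      apply Fin.ext
      by_cases h1 : (i : ℕ) < m + 1 <;> by_cases h2 : (j : ℕ) < m + 1
      · simp only [hf, dif_pos h1, dif_pos h2, Sum.inl.injEq] at hij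
        simpa using congrArg Fin.val hij
      · simp only [hf, dif_pos h1, dif_neg h2, reduceCtorEq] at hij
      · simp only [hf, dif_neg h1, dif_pos h2, reduceCtorEq] at hij
      · omega
    have hmain : hankelMatrix s' (m + 1) = (Matrix.fromBlocks A B Bᴴ D).submatrix f f := by
      ext i j
      simp only [Matrix.submatrix_apply, hf, hankelMatrix, Matrix.of_apply]
      have hi2 := i.isLt; have hj2 := j.isLt
      by_cases hi : (i : ℕ) < m + 1 <;> by_cases hj : (j : ℕ) < m + 1 <;>
        simp only [hi, hj, dif_pos, dif_neg, not_false_iff, dite_true, dite_false]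
      · simp only [Matrix.fromBlocks_apply₁₁, hA, hankelMatrix, Matrix.of_apply]
        simp only [hs', hg]
        rw [if_neg (by omega), if_pos (by omega)]
      · have hjv : (j : ℕ) = m + 1 := by omega
        simp only [Matrix.fromBlocks_apply₁₂, hB, Matrix.of_apply]
        simp only [hs', hjv]
        rw [if_neg (by omega)]
      · have hiv : (i : ℕ) = m + 1 := by omega
        simp only [Matrix.fromBlocks_apply₂₁, Matrix.conjTranspose_apply, hB,
          Matrix.of_apply, star_trivial]
        simp only [hs', hiv]
        rw [if_neg (by omega)]
        congr 1
        omega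
      · have hiv : (i : ℕ) = m + 1 := by omega
        have hjv : (j : ℕ) = m + 1 := by omega
        simp only [Matrix.fromBlocks_apply₂₂, hD, Matrix.of_apply]
        simp only [hs', hiv, hjv]
        rw [if_pos (by omega)]
    rw [hmain]
    exact posdef_submatrix hfb f hfinj

private noncomputable def uSeq (n : ℕ) (s : ℕ → ℝ) (hpd : (hankelMatrix s n).PosDef) :
    (j : ℕ) → {f : ℕ → ℝ // (hankelMatrix f (n + j)).PosDef}
  | 0 => ⟨s, hpd⟩
  | j + 1 =>
    let p := uSeq n s hpd j
    ⟨(onestep (n + j) p.1 p.2).choose, ((onestep (n + j) p.1 p.2).choose_spec).2⟩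

private lemma uSeq_succ (n : ℕ) (s : ℕ → ℝ) (hpd : (hankelMatrix s n).PosDef) (j k : ℕ)
    (hk : k ≤ 2 * (n + j)) : (uSeq n s hpd (j + 1)).1 k = (uSeq n s hpd j).1 k := by
  exact ((onestep (n + j) (uSeq n s hpd j).1 (uSeq n s hpd j).2).choose_spec).1 k hk

private lemma uSeq_stab (n : ℕ) (s : ℕ → ℝ) (hpd : (hankelMatrix s n).PosDef) (j : ℕ)
    {j' : ℕ} (hj : j ≤ j') (k : ℕ) (hk : k ≤ 2 * (n + j)) :
    (uSeq n s hpd j').1 k = (uSeq n s hpd j).1 k := by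
  induction j' , hj using Nat.le_induction with
  | base => rfl
  | succ j' hj ih =>
    rw [uSeq_succ n s hpd j' k (by omega), ih]

theorem stmt_8 (n : ℕ) (s : ℕ → ℝ) (hpd : (hankelMatrix s n).PosDef) :
    ∃ t : ℕ → ℝ, (∀ k ≤ 2 * n, t k = s k) ∧ ∀ m, (hankelMatrix t m).PosDef := by
  classical
  set t : ℕ → ℝ := fun k => (uSeq n s hpd k).1 k with ht
  have key : ∀ j k, k ≤ 2 * (n + j) → t k = (uSeq n s hpd j).1 k := by
    intro j k hk
    rcases le_total j k with h | h
    · exact uSeq_stab n s hpd j h k hk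
    · rw [ht]
      exact (uSeq_stab n s hpd k h k (by omega)).symm
  refine ⟨t, fun k hk => ?_, fun m => ?_⟩
  · have := key 0 k (by omega)
    simpa [uSeq] using this
  · have hm : m + 1 ≤ (n + m) + 1 := by omega
    have heq : hankelMatrix t m =
        (hankelMatrix (uSeq n s hpd m).1 (n + m)).submatrix (Fin.castLE hm) (Fin.castLE hm) := by
      ext i j
      simp only [hankelMatrix, Matrix.submatrix_apply, Matrix.of_apply, Fin.coe_castLE]
      exact key m ((i : ℕ) + (j : ℕ)) (by have := i.isLt; have := j.isLt; omega)
    rw [heq]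
    exact posdef_submatrix (uSeq n s hpd m).2 _ (Fin.castLE_injective hm)
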